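/- arXiv:1710.04332 — 2 statements merged into one kernel-verified Lean document; each statement's English description precedes it below -/
import Mathlib

section
/- Let p be a prime number and let H be a subgroup of the symmetric group S_p on p letters. Suppose H is transitive (for all i, j ∈ {1,...,p} there exists σ ∈ H with σ(i) = j) and H contains a transposition. Then H = S_p. -/
/-- A transitive subgroup of the symmetric group on `p` letters, `p` prime,
containing a transposition is the whole symmetric group. -/
theorem stmt_3 (p : ℕ) (hp : p.Prime) (H : Subgroup (Equiv.Perm (Fin p)))
    (htrans : ∀ i j : Fin p, ∃ σ ∈ H, σ i = j)
    (σ : Equiv.Perm (Fin p)) (hσH : σ ∈ H) (hσ : σ.IsSwap) :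
    H = ⊤ := by
  classical
  have hp' : Fintype.card (Fin p) = p := Fintype.card_fin p
  have hpos : 0 < p := hp.pos
  have z : Fin p := ⟨0, hpos⟩
  -- orbit of z under H is everything
  have horb : MulAction.orbit H z = Set.univ := by
    ext j
    simp only [Set.mem_univ, iff_true, MulAction.mem_orbit_iff]
    obtain ⟨τ, hτ, hτz⟩ := htrans z j
    exact ⟨⟨τ, hτ⟩, hτz⟩
  have hdvd : p ∣ Fintype.card H := by
    have key := MulAction.card_orbit_mul_card_stabilizer_eq_card_group H z
    have hcard : Fintype.card (MulAction.orbit H z) = p := by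
      exact (Fintype.card_congr ((Equiv.setCongr horb).trans (Equiv.Set.univ _))).trans hp'
    rw [hcard] at key
    exact Dvd.intro _ key
  have := Equiv.Perm.subgroup_eq_top_of_swap_mem (τ := σ) (H := H)
    (by rw [hp']; exact hp) (by rw [hp']; exact hdvd) hσH hσ
  exact this
end

section
/- Let d ≥ 1 and set γ = t^d and c = 2t^d + t in ℚ[t]. Define the critical orbit sequence a : ℕ → ℚ[t] by a_0 = γ and a_{n+1} = (a_n − γ)² + c (so a_n = φ_{(γ,c)}^n(γ) for the quadratic polynomial φ_{(γ,c)}(x) = (x − γ)² + c). Then for every n ≥ 1, the polynomial a_n ∈ ℚ[t] is squarefree; in particular its discriminant is nonzero. -/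
open Polynomial

namespace Stmt12
def M (k : ℕ) : ℕ := 2 ^ k - 1
noncomputable def E : ℕ → Polynomial ℤ
  | 0 => 1
  | k + 1 => E k ^ 2 + X ^ M (k + 1)
lemma M_succ (k : ℕ) : M (k + 1) = 2 * M k + 1 := by
  simp only [M, pow_succ]
  have : 1 ≤ 2 ^ k := Nat.one_le_two_pow
  omega

lemma E_sq_degree_lt (k : ℕ) : (E k ^ 2).degree < (X ^ M (k + 1) : Polynomial ℤ).degree →
    True := fun _ => trivial

lemma E_monic_natDegree (k : ℕ) : (E k).Monic ∧ (E k).natDegree = M k := by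
  induction k with
  | zero => exact ⟨monic_one, by simp [E, M]⟩
  | succ k ih =>
    obtain ⟨hm, hd⟩ := ih
    have hsq : (E k ^ 2).natDegree = 2 * M k := by
      rw [natDegree_pow, hd]
    have hlt : (E k ^ 2).degree < (X ^ M (k + 1) : Polynomial ℤ).degree := by
      rw [degree_X_pow]
      calc (E k ^ 2).degree ≤ ((E k ^ 2).natDegree : WithBot ℕ) := degree_le_natDegree
        _ < (M (k + 1) : WithBot ℕ) := by
            rw [hsq, M_succ]; exact_mod_cast Nat.lt_succ_self _
    constructor
    · show ((E k) ^ 2 + X ^ M (k + 1)).Monic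
      exact (monic_X_pow _).add_of_right hlt
    · show ((E k) ^ 2 + X ^ M (k + 1)).natDegree = M (k + 1)
      rw [natDegree_add_eq_right_of_natDegree_lt]
      · exact natDegree_X_pow _
      · rw [hsq, natDegree_X_pow, M_succ]; omega

lemma E_coeff_zero (k : ℕ) : (E k).coeff 0 = 1 := by
  induction k with
  | zero => simp [E]
  | succ k ih =>
    show ((E k) ^ 2 + X ^ M (k + 1) : Polynomial ℤ).coeff 0 = 1
    rw [coeff_add, coeff_X_pow, sq, mul_coeff_zero, ih]
    have : M (k + 1) ≠ 0 := by rw [M_succ]; omega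
    simp [this]
    omega

noncomputable def G (k : ℕ) : Polynomial ℤ := 2 * E k + X ^ M k

lemma M_pos {k : ℕ} (hk : 1 ≤ k) : 0 < M k := by
  have : 2 ^ 1 ≤ 2 ^ k := Nat.pow_le_pow_right (by norm_num) hk
  simp only [M]; omega

lemma G_coeff (k j : ℕ) : (G k).coeff j = 2 * (E k).coeff j + if j = M k then 1 else 0 := by
  simp [G, coeff_X_pow]

lemma G_natDegree (k : ℕ) : (G k).natDegree = M k := by
  have hub : (G k).natDegree ≤ M k := by
    apply natDegree_le_iff_coeff_eq_zero.mpr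
    intro j hj
    have hE : (E k).coeff j = 0 :=
      coeff_eq_zero_of_natDegree_lt (by rw [(E_monic_natDegree k).2]; omega)
    rw [G_coeff, hE, if_neg (by omega)]; ring
  have hlb : M k ≤ (G k).natDegree := by
    apply le_natDegree_of_ne_zero
    rw [G_coeff, if_pos rfl]
    have : (E k).coeff (M k) = 1 := by
      have := (E_monic_natDegree k).1
      rw [Monic, leadingCoeff, (E_monic_natDegree k).2] at this
      exact this
    rw [this]; norm_num
  omega

lemma G_leadingCoeff (k : ℕ) : (G k).leadingCoeff = 3 := by
  rw [leadingCoeff, G_natDegree, G_coeff, if_pos rfl]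
  have : (E k).coeff (M k) = 1 := by
    have := (E_monic_natDegree k).1
    rw [Monic, leadingCoeff, (E_monic_natDegree k).2] at this
    exact this
  rw [this]; norm_num

lemma G_coeff_zero {k : ℕ} (hk : 1 ≤ k) : (G k).coeff 0 = 2 := by
  rw [G_coeff, E_coeff_zero, if_neg (by have := M_pos hk; omega)]
  ring

lemma G_coeff_even {k j : ℕ} (hj : j < M k) : (2 : ℤ) ∣ (G k).coeff j := by
  rw [G_coeff, if_neg (by omega)]
  exact ⟨(E k).coeff j, by ring⟩

lemma G_primitive {k : ℕ} (hk : 1 ≤ k) : (G k).IsPrimitive := by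
  intro r hr
  rw [C_dvd_iff_dvd_coeff] at hr
  have h2 : r ∣ 2 := G_coeff_zero hk ▸ hr 0
  have h3 : r ∣ 3 := by
    have := hr (M k)
    rwa [← G_natDegree, ← leadingCoeff, G_leadingCoeff] at this
  exact isUnit_of_dvd_one (by have := dvd_sub h3 h2; norm_num at this; exact this)

lemma G_irreducible {k : ℕ} (hk : 1 ≤ k) : Irreducible (G k) := by
  apply IsEisensteinAt.irreducible (𝓟 := Ideal.span {(2 : ℤ)})
  · constructor
    · rw [G_leadingCoeff, Ideal.mem_span_singleton]
      norm_num
    · intro j hj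
      rw [Ideal.mem_span_singleton]
      exact G_coeff_even (by rwa [G_natDegree] at hj)
    · rw [G_coeff_zero hk, sq, Ideal.span_singleton_mul_span_singleton,
        Ideal.mem_span_singleton]
      norm_num
  · exact (Ideal.span_singleton_prime (by norm_num)).mpr Int.prime_two
  · exact G_primitive hk
  · rw [G_natDegree]; exact M_pos hk


lemma reflect_reflect {R : Type*} [Semiring R] (N : ℕ) (f : Polynomial R) :
    reflect N (reflect N f) = f := by
  ext i
  rw [coeff_reflect, coeff_reflect, revAt_invol]

lemma reflect_succ {R : Type*} [Semiring R] {N : ℕ} {q : Polynomial R}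
    (hq : q.natDegree ≤ N) : reflect (N + 1) q = X * reflect N q := by
  ext i
  cases i with
  | zero =>
    rw [coeff_reflect, revAt_le (by omega), X_mul, coeff_mul_X_zero]
    exact coeff_eq_zero_of_natDegree_lt (by omega)
  | succ j =>
    rw [coeff_reflect, X_mul, coeff_mul_X, coeff_reflect]
    by_cases hj : j ≤ N
    · rw [revAt_le (by omega), revAt_le hj]
      congr 1
      omega
    · rw [revAt_eq_self_of_lt (by omega), revAt_eq_self_of_lt (by omega)]
      rw [coeff_eq_zero_of_natDegree_lt (by omega), coeff_eq_zero_of_natDegree_lt (by omega)]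

noncomputable def h : ℕ → Polynomial ℤ
  | 0 => 3
  | k + 1 => X * (h k - 1) ^ 2 + 3

lemma h_coeff_zero (k : ℕ) : (h k).coeff 0 = 3 := by
  cases k with
  | zero => simp [h]
  | succ k => simp [h, coeff_add, mul_comm X _, coeff_mul_X_zero]

lemma bridge (k : ℕ) : h k = (reflect (M k) (G k)).comp (C 2 * X) := by
  induction k with
  | zero =>
    show (3 : Polynomial ℤ) = _
    have : G 0 = 3 := by
      show 2 * E 0 + X ^ M 0 = 3
      show 2 * 1 + X ^ 0 = 3
      norm_num
    rw [this, show M 0 = 0 from rfl, show (3 : Polynomial ℤ) = C 3 by norm_num,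
      reflect_C, pow_zero, mul_one, C_comp]
  | succ k ih =>
    have hdegE : (E k).natDegree ≤ M k := le_of_eq (E_monic_natDegree k).2
    have hEk : (E k).coeff (M k) = 1 := by
      have := (E_monic_natDegree k).1
      rwa [Monic, leadingCoeff, (E_monic_natDegree k).2] at this
    have hG' : G (k + 1) = 2 * E k ^ 2 + 3 * X ^ M (k + 1) := by
      show 2 * (E k ^ 2 + X ^ M (k + 1)) + X ^ M (k + 1) = _
      ring
    have h2 : (2 : Polynomial ℤ) = C 2 := by norm_num
    have h3 : (3 : Polynomial ℤ) = C 3 := by norm_num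
    have hM : M (k + 1) = M k + M k + 1 := by rw [M_succ]; ring
    have e1 : reflect (M (k + 1)) (E k ^ 2)
        = X * (reflect (M k) (E k) * reflect (M k) (E k)) := by
      rw [hM, reflect_succ (by rw [natDegree_pow, (E_monic_natDegree k).2]; omega), sq,
        reflect_mul (E k) (E k) hdegE hdegE]
    have hrefl : reflect (M (k + 1)) (G (k + 1))
        = C 2 * (X * (reflect (M k) (E k) * reflect (M k) (E k))) + C 3 := by
      rw [hG', h2, h3, reflect_add, reflect_C_mul, reflect_C_mul, reflect_monomial,
        revAt_le (le_refl _), Nat.sub_self, pow_zero, mul_one, e1]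
    have hGk : reflect (M k) (G k) = C 2 * reflect (M k) (E k) + 1 := by
      show reflect (M k) (2 * E k + X ^ M k) = _
      rw [h2, reflect_add, reflect_C_mul, reflect_monomial, revAt_le (le_refl _),
        Nat.sub_self, pow_zero]
    show X * (h k - 1) ^ 2 + 3 = _
    rw [hrefl, ih, hGk, h3]
    simp only [add_comp, mul_comp, C_comp, X_comp, one_comp]
    ring


lemma irreducible_reflect_comp {F : Polynomial ℚ} {m : ℕ} (hm : 0 < m)
    (hdeg : F.natDegree = m) (h0 : F.coeff 0 ≠ 0) (hirr : Irreducible F) :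
    Irreducible ((reflect m F).comp (C 2 * X)) := by
  have hF0 : F ≠ 0 := fun hF => h0 (by simp [hF])
  have hlead : F.coeff m ≠ 0 := by
    rw [← hdeg, ← leadingCoeff]
    exact leadingCoeff_ne_zero.mpr hF0
  have hrd : (reflect m F).natDegree = m := by
    have hle : (reflect m F).natDegree ≤ m := by
      apply natDegree_le_iff_coeff_eq_zero.mpr
      intro j hj
      rw [coeff_reflect, revAt_eq_self_of_lt hj]
      exact coeff_eq_zero_of_natDegree_lt (by omega)
    have hge : m ≤ (reflect m F).natDegree := by
      apply le_natDegree_of_ne_zero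
      rwa [coeff_reflect, revAt_le (le_refl m), Nat.sub_self]
    omega
  set K := (reflect m F).comp (C 2 * X) with hKdef
  have hK : K.natDegree = m := by
    rw [hKdef, natDegree_comp, natDegree_C_mul_X (2 : ℚ) two_ne_zero, hrd, mul_one]
  have hK0 : K ≠ 0 := fun hc => by rw [hc, natDegree_zero] at hK; omega
  constructor
  · exact not_isUnit_of_natDegree_pos _ (hK ▸ hm)
  · intro u v huv
    by_contra hcon
    push_neg at hcon
    obtain ⟨hu, hv⟩ := hcon
    have hu0 : u ≠ 0 := fun hc => hK0 (by rw [huv, hc, zero_mul])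
    have hv0 : v ≠ 0 := fun hc => hK0 (by rw [huv, hc, mul_zero])
    have hdu : 0 < u.natDegree := by
      rcases Nat.eq_zero_or_pos u.natDegree with hz | hp
      · exfalso
        apply hu
        rw [eq_C_of_natDegree_eq_zero hz]
        apply isUnit_C.mpr
        apply isUnit_iff_ne_zero.mpr
        intro hcz
        apply hu0
        rw [eq_C_of_natDegree_eq_zero hz, hcz, map_zero]
      · exact hp
    have hdv : 0 < v.natDegree := by
      rcases Nat.eq_zero_or_pos v.natDegree with hz | hp
      · exfalso
        apply hv
        rw [eq_C_of_natDegree_eq_zero hz]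
        apply isUnit_C.mpr
        apply isUnit_iff_ne_zero.mpr
        intro hcz
        apply hv0
        rw [eq_C_of_natDegree_eq_zero hz, hcz, map_zero]
      · exact hp
    set u' := u.comp (C (2⁻¹ : ℚ) * X) with hu'def
    set v' := v.comp (C (2⁻¹ : ℚ) * X) with hv'def
    have hcompX : (C (2 : ℚ) * X).comp (C (2⁻¹ : ℚ) * X) = X := by
      rw [mul_comp, C_comp, X_comp, ← mul_assoc, ← C_mul]
      norm_num
    have hre : u' * v' = reflect m F := by
      have h1 : K.comp (C (2⁻¹ : ℚ) * X) = reflect m F := by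
        rw [hKdef, comp_assoc, hcompX, comp_X]
      rw [hu'def, hv'def, ← mul_comp, ← huv, h1]
    have hdu' : u'.natDegree = u.natDegree := by
      rw [hu'def, natDegree_comp, natDegree_C_mul_X (2⁻¹ : ℚ) (by norm_num), mul_one]
    have hdv' : v'.natDegree = v.natDegree := by
      rw [hv'def, natDegree_comp, natDegree_C_mul_X (2⁻¹ : ℚ) (by norm_num), mul_one]
    have hu'0 : u' ≠ 0 := fun hc => by
      rw [hc, zero_mul] at hre; exact hF0 ((reflect_eq_zero_iff).mp hre.symm)
    have hv'0 : v' ≠ 0 := fun hc => by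
      rw [hc, mul_zero] at hre; exact hF0 ((reflect_eq_zero_iff).mp hre.symm)
    have hsum : u'.natDegree + v'.natDegree = m := by
      rw [← natDegree_mul hu'0 hv'0, hre, hrd]
    have hc0 : u'.coeff 0 * v'.coeff 0 ≠ 0 := by
      rw [← mul_coeff_zero, hre, coeff_reflect, revAt_le (by omega), Nat.sub_zero]
      exact hlead
    have hFfact : F = reflect u'.natDegree u' * reflect v'.natDegree v' := by
      have h1 : F = reflect m (u' * v') := by rw [hre, reflect_reflect]
      rw [h1, ← hsum, reflect_mul u' v' (le_refl _) (le_refl _)]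
    rcases hirr.isUnit_or_isUnit hFfact with hun | hun
    · apply not_isUnit_of_natDegree_pos _ ?_ hun
      have : (reflect u'.natDegree u').coeff u'.natDegree ≠ 0 := by
        rw [coeff_reflect, revAt_le (le_refl _), Nat.sub_self]
        exact fun hc => hc0 (by rw [hc, zero_mul])
      have h1 := le_natDegree_of_ne_zero this
      omega
    · apply not_isUnit_of_natDegree_pos _ ?_ hun
      have : (reflect v'.natDegree v').coeff v'.natDegree ≠ 0 := by
        rw [coeff_reflect, revAt_le (le_refl _), Nat.sub_self]
        exact fun hc => hc0 (by rw [hc, mul_zero])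
      have h1 := le_natDegree_of_ne_zero this
      omega



noncomputable def A (d : ℕ) : ℕ → Polynomial ℤ
  | 0 => X ^ d
  | n + 1 => (A d n - X ^ d) ^ 2 + (2 * X ^ d + X)

lemma A_one_eq (k : ℕ) : A 1 (k + 1) = X * h k := by
  induction k with
  | zero =>
    show (A 1 0 - X ^ 1) ^ 2 + (2 * X ^ 1 + X) = X * h 0
    show ((X : Polynomial ℤ) ^ 1 - X ^ 1) ^ 2 + (2 * X ^ 1 + X) = X * 3
    ring
  | succ k ih =>
    show (A 1 (k + 1) - X ^ 1) ^ 2 + (2 * X ^ 1 + X) = X * h (k + 1)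
    rw [ih]
    show _ = X * (X * (h k - 1) ^ 2 + 3)
    ring

lemma branch2 {k : ℕ} (hk : 1 ≤ k) :
    Squarefree ((A 1 (k + 1)).map (Int.castRingHom ℚ)) := by
  rw [A_one_eq, Polynomial.map_mul, map_X]
  set Kq := (h k).map (Int.castRingHom ℚ) with hKqdef
  have hinj : Function.Injective (Int.castRingHom ℚ) := Int.cast_injective
  have hGirr : Irreducible ((G k).map (Int.castRingHom ℚ)) :=
    (IsPrimitive.Int.irreducible_iff_irreducible_map_cast (G_primitive hk)).mp
      (G_irreducible hk)
  have hFdeg : ((G k).map (Int.castRingHom ℚ)).natDegree = M k := by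
    rw [natDegree_map_eq_of_injective hinj, G_natDegree]
  have hF0 : ((G k).map (Int.castRingHom ℚ)).coeff 0 ≠ 0 := by
    rw [coeff_map, G_coeff_zero hk]
    norm_num
  have hKirr : Irreducible Kq := by
    have hmain := irreducible_reflect_comp (M_pos hk) hFdeg hF0 hGirr
    have hb : Kq = (reflect (M k) ((G k).map (Int.castRingHom ℚ))).comp (C 2 * X) := by
      rw [hKqdef, bridge k, Polynomial.map_comp, reflect_map, Polynomial.map_mul, map_C, map_X]
      norm_num
    rwa [hb]
  have hK0 : Kq.coeff 0 ≠ 0 := by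
    rw [hKqdef, coeff_map, h_coeff_zero]
    norm_num
  rw [squarefree_mul_iff]
  refine ⟨?_, irreducible_X.squarefree, hKirr.squarefree⟩
  intro r hrX hrK
  obtain ⟨s, hs⟩ := hrX
  rcases irreducible_X.isUnit_or_isUnit hs with hur | hus
  · exact hur
  · exfalso
    apply hK0
    rw [← X_dvd_iff]
    obtain ⟨t, ht⟩ := hrK
    obtain ⟨w, hw⟩ := hus.exists_right_inv
    exact ⟨w * t, by rw [ht, hs]; linear_combination (-(r * t)) * hw⟩


lemma branch1 {B : Polynomial ℤ} (hprim : B.IsPrimitive)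
    (hder : B.derivative.map (Int.castRingHom (ZMod 2)) = 1)
    (hlc : ¬ ((4 : ℤ) ∣ B.leadingCoeff)) :
    Squarefree (B.map (Int.castRingHom ℚ)) := by
  have hinj : Function.Injective (Int.castRingHom ℚ) := Int.cast_injective
  have hB0 : B ≠ 0 := hprim.ne_zero
  have hBq0 : B.map (Int.castRingHom ℚ) ≠ 0 := (Polynomial.map_ne_zero_iff hinj).mpr hB0
  intro x hx
  by_contra hxu
  have hx0 : x ≠ 0 := by
    rintro rfl
    rw [zero_mul] at hx
    exact hBq0 (zero_dvd_iff.mp hx)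
  set z := IsLocalization.integerNormalization (nonZeroDivisors ℤ) x with hzdef
  obtain ⟨c, hc⟩ := IsLocalization.integerNormalization_map_to_map (nonZeroDivisors ℤ) x
  rw [algebraMap_int_eq] at hc
  have hcne : ((c : ℤ) : ℚ) ≠ 0 := by
    exact_mod_cast nonZeroDivisors.coe_ne_zero c
  have hmapz : z.map (Int.castRingHom ℚ) = C ((c : ℤ) : ℚ) * x := by
    rw [← hzdef] at hc
    rw [hc, zsmul_eq_mul]
    norm_num [C_eq_intCast]
  have hz0 : z ≠ 0 := by
    intro hcz
    rw [hcz, Polynomial.map_zero] at hmapz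
    exact hx0 (by
      rcases mul_eq_zero.mp hmapz.symm with hC | hxx
      · exact absurd hC (by simp [hcne])
      · exact hxx)
  set P := z.primPart with hPdef
  have hPprim : P.IsPrimitive := z.isPrimitive_primPart
  have hct0 : ((z.content : ℤ) : ℚ) ≠ 0 := by
    exact_mod_cast (Polynomial.content_eq_zero_iff).not.mpr hz0
  set u : ℚ := ((c : ℤ) : ℚ) * ((z.content : ℤ) : ℚ)⁻¹ with hudef
  have hu0 : u ≠ 0 := mul_ne_zero hcne (inv_ne_zero hct0)
  have hPx : P.map (Int.castRingHom ℚ) = C u * x := by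
    have h1 : z.map (Int.castRingHom ℚ)
        = C ((z.content : ℤ) : ℚ) * P.map (Int.castRingHom ℚ) := by
      conv_lhs => rw [z.eq_C_content_mul_primPart]
      rw [Polynomial.map_mul, map_C]
      rfl
    have h2 := h1.symm.trans hmapz
    -- C ct * mapP = C c * x
    have := congrArg (fun p => C (((z.content : ℤ) : ℚ))⁻¹ * p) h2
    rw [← mul_assoc, ← C_mul, inv_mul_cancel₀ hct0, C_1, one_mul] at this
    rw [this, ← mul_assoc, ← C_mul, hudef, mul_comm (((c : ℤ) : ℚ))]
  have hdvdQ : P.map (Int.castRingHom ℚ) * P.map (Int.castRingHom ℚ)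
      ∣ B.map (Int.castRingHom ℚ) := by
    obtain ⟨t, ht⟩ := hx
    refine ⟨C (u⁻¹ * u⁻¹) * t, ?_⟩
    rw [ht, hPx]
    have h1 : (C u : Polynomial ℚ) * C u * C (u⁻¹ * u⁻¹) = 1 := by
      rw [← C_mul, ← C_mul, show u * u * (u⁻¹ * u⁻¹) = 1 by field_simp, C_1]
    linear_combination (-(x * x * t)) * h1
  have hPPdvd : P * P ∣ B := by
    rw [IsPrimitive.Int.dvd_iff_map_cast_dvd_map_cast (P * P) B (hPprim.mul hPprim),
      Polynomial.map_mul]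
    exact hdvdQ
  obtain ⟨Q, hQ⟩ := hPPdvd
  have hQ0 : Q ≠ 0 := by
    intro hq
    rw [hq, mul_zero] at hQ
    exact hB0 hQ
  -- mod 2
  have hsep : (B.map (Int.castRingHom (ZMod 2))).Separable := by
    rw [Polynomial.Separable, derivative_map, hder]
    exact isCoprime_one_right
  have hsq : Squarefree (B.map (Int.castRingHom (ZMod 2))) := hsep.squarefree
  have hPunit : IsUnit (P.map (Int.castRingHom (ZMod 2))) := by
    apply hsq
    refine ⟨Q.map (Int.castRingHom (ZMod 2)), ?_⟩
    rw [hQ, Polynomial.map_mul, Polynomial.map_mul]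
  -- degree of x positive
  have hdegx : 0 < x.natDegree := by
    rcases Nat.eq_zero_or_pos x.natDegree with hz | hp
    · exfalso
      apply hxu
      rw [eq_C_of_natDegree_eq_zero hz]
      apply isUnit_C.mpr
      apply isUnit_iff_ne_zero.mpr
      intro hcz
      apply hx0
      rw [eq_C_of_natDegree_eq_zero hz, hcz, map_zero]
    · exact hp
  have hdegP : 0 < P.natDegree := by
    have e1 : (P.map (Int.castRingHom ℚ)).natDegree = P.natDegree :=
      natDegree_map_eq_of_injective hinj P
    rw [hPx, natDegree_C_mul hu0] at e1
    omega
  have h2P : (2 : ℤ) ∣ P.leadingCoeff := by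
    have hz2 : (P.map (Int.castRingHom (ZMod 2))).natDegree = 0 :=
      natDegree_eq_zero_of_isUnit hPunit
    have hco : (P.map (Int.castRingHom (ZMod 2))).coeff P.natDegree = 0 :=
      coeff_eq_zero_of_natDegree_lt (by omega)
    rw [coeff_map] at hco
    have h2 := (ZMod.intCast_zmod_eq_zero_iff_dvd (P.coeff P.natDegree) 2).mp
      (by exact_mod_cast hco)
    rw [Polynomial.leadingCoeff]
    exact_mod_cast h2
  obtain ⟨e, he⟩ := h2P
  apply hlc
  have hlcB : B.leadingCoeff = P.leadingCoeff * P.leadingCoeff * Q.leadingCoeff := by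
    rw [hQ, leadingCoeff_mul, leadingCoeff_mul]
  rw [hlcB, he]
  exact ⟨e * e * Q.leadingCoeff, by ring⟩



lemma A_succ (d n : ℕ) : A d (n + 1) = (A d n - X ^ d) ^ 2 + (2 * X ^ d + X) := rfl

lemma A_coeff_zero {d : ℕ} (hd : 1 ≤ d) : ∀ n, (A d n).coeff 0 = 0 := by
  intro n
  induction n with
  | zero =>
    show ((X : Polynomial ℤ) ^ d).coeff 0 = 0
    rw [coeff_X_pow]
    simp only [if_neg (by omega : ¬ 0 = d)]
  | succ n ih =>
    rw [A_succ, coeff_add, coeff_add, sq, mul_coeff_zero, coeff_sub, ih, coeff_X_pow,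
      if_neg (by omega : ¬ 0 = d), coeff_mul, coeff_X_zero]
    simp [coeff_X_pow, if_neg (by omega : ¬ 0 = d)]

lemma low_deg {d : ℕ} (hd : 1 ≤ d) : (2 * (X : Polynomial ℤ) ^ d + X).natDegree ≤ d := by
  apply (natDegree_add_le _ _).trans
  apply max_le
  · apply natDegree_mul_le.trans
    have h1 : (2 : Polynomial ℤ).natDegree = 0 := by simp
    rw [h1, natDegree_X_pow]
    omega
  · exact natDegree_X_le.trans (by omega)

lemma A_coeff_one {d : ℕ} (hd : 2 ≤ d) (n : ℕ) : (A d (n + 1)).coeff 1 = 1 := by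
  have hXdvd : (X : Polynomial ℤ) ∣ (A d n - X ^ d) := by
    rw [X_dvd_iff, coeff_sub, A_coeff_zero (by omega) n, coeff_X_pow,
      if_neg (by omega : ¬ 0 = d)]
    ring
  obtain ⟨s, hs⟩ := hXdvd
  have hsq : (A d n - X ^ d) ^ 2 = s ^ 2 * X ^ 2 := by rw [hs]; ring
  rw [A_succ, coeff_add, hsq, coeff_mul_X_pow', if_neg (by omega), coeff_add, coeff_X_one,
    coeff_mul, zero_add]
  have hz : ∀ p ∈ Finset.HasAntidiagonal.antidiagonal 1, (2 : Polynomial ℤ).coeff p.1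
      * ((X : Polynomial ℤ) ^ d).coeff p.2 = 0 := by
    intro p hp
    rw [Finset.HasAntidiagonal.mem_antidiagonal] at hp
    rw [coeff_X_pow, if_neg (by omega : ¬ p.2 = d), mul_zero]
  rw [Finset.sum_eq_zero hz]
  norm_num

lemma A_primitive {d : ℕ} (hd : 2 ≤ d) (n : ℕ) : (A d (n + 1)).IsPrimitive := by
  intro r hr
  have h1 := (C_dvd_iff_dvd_coeff r _).mp hr 1
  rw [A_coeff_one hd] at h1
  exact isUnit_of_dvd_one h1

lemma two_poly_zmod : (2 : Polynomial (ZMod 2)) = 0 := by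
  have h : ((2 : ZMod 2)) = 0 := rfl
  calc (2 : Polynomial (ZMod 2)) = C 2 := by rw [map_ofNat C 2]
  _ = C 0 := by rw [h]
  _ = 0 := map_zero C

lemma A_deriv_mod2 (d n : ℕ) :
    (derivative (A d (n + 1))).map (Int.castRingHom (ZMod 2)) = 1 := by
  rw [← derivative_map]
  have hmap : (A d (n + 1)).map (Int.castRingHom (ZMod 2))
      = ((A d n).map (Int.castRingHom (ZMod 2)) - X ^ d) ^ 2 + X := by
    rw [A_succ, Polynomial.map_add, Polynomial.map_pow, Polynomial.map_sub,
      Polynomial.map_pow, map_X, Polynomial.map_add, Polynomial.map_mul,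
      Polynomial.map_pow, map_X, Polynomial.map_ofNat, two_poly_zmod]
    ring
  rw [hmap, derivative_add, derivative_pow, derivative_X]
  norm_num
  rw [show ((2 : ZMod 2)) = 0 from rfl]
  simp

lemma add_monic {p q : Polynomial ℤ} (hp : p.Monic) (h : q.natDegree < p.natDegree) :
    (p + q).Monic ∧ (p + q).natDegree = p.natDegree := by
  have hlt : q.degree < p.degree := by
    calc q.degree ≤ (q.natDegree : WithBot ℕ) := degree_le_natDegree
    _ < (p.natDegree : WithBot ℕ) := by exact_mod_cast h
    _ = p.degree := (degree_eq_natDegree hp.ne_zero).symm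
  exact ⟨hp.add_of_left hlt, natDegree_add_eq_left_of_natDegree_lt h⟩

lemma A_one_deg {d : ℕ} (hd : 2 ≤ d) :
    (A d 1).natDegree = d ∧ (A d 1).leadingCoeff = 2 := by
  have hA1 : A d 1 = 2 * X ^ d + X := by
    rw [A_succ]
    show ((X : Polynomial ℤ) ^ d - X ^ d) ^ 2 + (2 * X ^ d + X) = _
    ring
  have hcd : (2 * (X : Polynomial ℤ) ^ d + X).coeff d = 2 := by
    rw [coeff_add, coeff_X, if_neg (by omega : ¬ 1 = d)]
    have h2 : (2 : Polynomial ℤ) = C 2 := by norm_num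
    rw [h2, coeff_C_mul, coeff_X_pow, if_pos rfl, mul_one]
    ring
  have hle := low_deg (by omega : 1 ≤ d)
  have hge : d ≤ (2 * (X : Polynomial ℤ) ^ d + X).natDegree :=
    le_natDegree_of_ne_zero (by rw [hcd]; norm_num)
  have hdeg : (A d 1).natDegree = d := by rw [hA1]; omega
  refine ⟨hdeg, ?_⟩
  rw [leadingCoeff, hdeg, hA1, hcd]

lemma A_monic {d : ℕ} (hd : 2 ≤ d) :
    ∀ n, (A d (n + 2)).Monic ∧ d < (A d (n + 2)).natDegree := by
  intro n
  induction n with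
  | zero =>
    have hA2 : A d 2 = ((X : Polynomial ℤ) ^ d + X) ^ 2 + (2 * X ^ d + X) := by
      rw [A_succ, A_succ]
      show ((((X : Polynomial ℤ) ^ d - X ^ d) ^ 2 + (2 * X ^ d + X)) - X ^ d) ^ 2
        + (2 * X ^ d + X) = _
      ring
    have hbase := add_monic (p := (X : Polynomial ℤ) ^ d) (q := X) (monic_X_pow d)
      (by rw [natDegree_X_pow, natDegree_X]; omega)
    have hbase2 : ((X : Polynomial ℤ) ^ d + X).natDegree = d := by
      rw [hbase.2, natDegree_X_pow]
    have hsq : (((X : Polynomial ℤ) ^ d + X) ^ 2).Monic := hbase.1.pow 2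
    have hsqdeg : (((X : Polynomial ℤ) ^ d + X) ^ 2).natDegree = 2 * d := by
      rw [natDegree_pow, hbase2]
    have hlow := low_deg (by omega : 1 ≤ d)
    have hlt2 : (2 * (X : Polynomial ℤ) ^ d + X).natDegree
        < (((X : Polynomial ℤ) ^ d + X) ^ 2).natDegree := by omega
    have hres := add_monic hsq hlt2
    rw [hA2]
    exact ⟨hres.1, by rw [hres.2, hsqdeg]; omega⟩
  | succ n ih =>
    obtain ⟨hm, hdeg⟩ := ih
    have hsubm : (A d (n + 2) - X ^ d).Monic := by
      apply hm.sub_of_left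
      calc ((X : Polynomial ℤ) ^ d).degree
          ≤ (((X : Polynomial ℤ) ^ d).natDegree : WithBot ℕ) := degree_le_natDegree
      _ < ((A d (n + 2)).natDegree : WithBot ℕ) := by
          rw [natDegree_X_pow]; exact_mod_cast hdeg
      _ = (A d (n + 2)).degree := (degree_eq_natDegree hm.ne_zero).symm
    have hsubdeg : (A d (n + 2) - X ^ d).natDegree = (A d (n + 2)).natDegree := by
      rw [sub_eq_add_neg]
      exact (add_monic hm (by rw [natDegree_neg, natDegree_X_pow]; omega)).2
    have hsq : ((A d (n + 2) - X ^ d) ^ 2).Monic := hsubm.pow 2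
    have hsqdeg : ((A d (n + 2) - X ^ d) ^ 2).natDegree = 2 * (A d (n + 2)).natDegree := by
      rw [natDegree_pow, hsubdeg]
    have hlow := low_deg (by omega : 1 ≤ d)
    have hlt2 : (2 * (X : Polynomial ℤ) ^ d + X).natDegree
        < ((A d (n + 2) - X ^ d) ^ 2).natDegree := by omega
    have hres := add_monic hsq hlt2
    rw [show n + 1 + 2 = (n + 2) + 1 from rfl, A_succ]
    exact ⟨hres.1, by rw [hres.2, hsqdeg]; omega⟩



lemma A_zero (d : ℕ) : A d 0 = X ^ d := rfl

lemma squarefree_three_X : Squarefree ((X : Polynomial ℚ) * 3) := by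
  have h3 : IsUnit (3 : Polynomial ℚ) := by
    rw [show (3 : Polynomial ℚ) = C 3 from (map_ofNat C 3).symm]
    exact isUnit_C.mpr (by norm_num)
  rw [squarefree_mul_iff]
  exact ⟨fun r _ hr3 => isUnit_of_dvd_unit hr3 h3, irreducible_X.squarefree, h3.squarefree⟩



end Stmt12

/-- For `γ = t^d`, `c = 2t^d + t` in `ℚ[t]` (`d ≥ 1`), every term `a_n`
(`n ≥ 1`) of the critical orbit `a₀ = γ`, `a_{n+1} = (a_n - γ)² + c` is squarefree. -/
theorem stmt_12 (d : ℕ) (hd : 1 ≤ d) (a : ℕ → Polynomial ℚ)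
    (h0 : a 0 = X ^ d)
    (hrec : ∀ n, a (n + 1) = (a n - X ^ d) ^ 2 + (2 * X ^ d + X)) :
    ∀ n, 1 ≤ n → Squarefree (a n) := by
  have hmap : ∀ n, a n = (Stmt12.A d n).map (Int.castRingHom ℚ) := by
    intro n
    induction n with
    | zero => rw [h0, Stmt12.A_zero, Polynomial.map_pow, map_X]
    | succ n ih =>
      rw [hrec, ih, Stmt12.A_succ, Polynomial.map_add, Polynomial.map_pow,
        Polynomial.map_sub, Polynomial.map_pow, map_X, Polynomial.map_add,
        Polynomial.map_mul, Polynomial.map_pow, map_X, Polynomial.map_ofNat]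
  intro n hn
  obtain ⟨k, rfl⟩ : ∃ k, n = k + 1 := ⟨n - 1, by omega⟩
  rw [hmap]
  rcases eq_or_lt_of_le hd with hd1 | hd2
  · subst hd1
    cases k with
    | zero =>
      rw [Stmt12.A_one_eq 0, show Stmt12.h 0 = 3 from rfl, Polynomial.map_mul, map_X,
        Polynomial.map_ofNat]
      exact Stmt12.squarefree_three_X
    | succ k => exact Stmt12.branch2 (by omega)
  · have hd2' : 2 ≤ d := hd2
    cases k with
    | zero =>
      apply Stmt12.branch1 (Stmt12.A_primitive hd2' 0) (Stmt12.A_deriv_mod2 d 0)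
      rw [(Stmt12.A_one_deg hd2').2]
      norm_num
    | succ k =>
      apply Stmt12.branch1 (Stmt12.A_primitive hd2' (k + 1)) (Stmt12.A_deriv_mod2 d (k + 1))
      have hm := (Stmt12.A_monic hd2' k).1
      rw [hm.leadingCoeff]
      norm_num
end
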